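/- Let D be a dihedral group of order 2^{k+1} (k ≥ 2) with cyclic maximal subgroup C, and let S be a finite 2-group containing D as a normal subgroup. Let S₀ be the set of elements s ∈ S with s² ∈ C_S(D)·D. Then every element of S₀ squares into C_S(D)·C, i.e. s² ∈ C_S(D)C for all s ∈ S₀. -/
import Mathlib

open Pointwise

section Stmt4Aux

/-- The rotation subgroup of a dihedral group. -/
def stmt4rots (n : ℕ) : Subgroup (DihedralGroup n) where
  carrier := {x | ∃ i, x = DihedralGroup.r i}
  one_mem' := ⟨0, DihedralGroup.one_def⟩
  mul_mem' := by
    rintro _ _ ⟨i, rfl⟩ ⟨j, rfl⟩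
    exact ⟨i + j, by simp⟩
  inv_mem' := by
    rintro _ ⟨i, rfl⟩
    exact ⟨-i, rfl⟩

lemma stmt4rots_card (n : ℕ) : Nat.card (stmt4rots n) = n := by
  have hb : Function.Bijective (fun i : ZMod n => (⟨DihedralGroup.r i, ⟨i, rfl⟩⟩ : stmt4rots n)) := by
    constructor
    · intro i j hij
      simpa [DihedralGroup.r.injEq] using congrArg (fun x : stmt4rots n => (x : DihedralGroup n)) hij
    · rintro ⟨x, i, rfl⟩
      exact ⟨i, rfl⟩
  rw [← Nat.card_eq_of_bijective _ hb, Nat.card_zmod]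

lemma stmt4mem_rots {n : ℕ} {x : DihedralGroup n} (h : 2 < orderOf x) : x ∈ stmt4rots n := by
  cases x with
  | r i => exact ⟨i, rfl⟩
  | sr i => simp [DihedralGroup.orderOf_sr] at h

lemma stmt4sr_inv {n : ℕ} (j : ZMod n) : (DihedralGroup.sr j)⁻¹ = DihedralGroup.sr j :=
  inv_eq_of_mul_eq_one_right (DihedralGroup.sr_mul_self j)

lemma stmt4r_inv {n : ℕ} (i : ZMod n) : (DihedralGroup.r i)⁻¹ = DihedralGroup.r (-i) :=
  inv_eq_of_mul_eq_one_right (by rw [DihedralGroup.r_mul_r, add_neg_cancel, DihedralGroup.one_def])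

lemma stmt4orderOf_conj {G : Type*} [Group G] (a x : G) :
    orderOf (a * x * a⁻¹) = orderOf x := by
  simpa using (MulAut.conj a).orderOf_eq x

end Stmt4Aux

/-- Let `D` be a dihedral group of order `2^(k+1)` (`k ≥ 2`) with cyclic maximal
subgroup `C`, and `S` a finite `2`-group containing `D` as a normal subgroup.
Every element of `S` squaring into `C_S(D)·D` in fact squares into `C_S(D)·C`. -/
theorem stmt_4 (k : ℕ) (hk : 2 ≤ k) (S : Type*) [Group S] [Finite S]
    (hS : IsPGroup 2 S) (D : Subgroup S) (hDn : D.Normal)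
    (hD : Nonempty (D ≃* DihedralGroup (2 ^ k)))
    (C : Subgroup S) (hCD : C ≤ D) (hCcyc : IsCyclic C) (hCcard : Nat.card C = 2 ^ k)
    (s : S) (hs : s ^ 2 ∈ Subgroup.centralizer (D : Set S) ⊔ D) :
    s ^ 2 ∈ Subgroup.centralizer (D : Set S) ⊔ C := by
  obtain ⟨e⟩ := hD
  haveI : NeZero (2 ^ k) := ⟨pow_ne_zero _ two_ne_zero⟩
  have h2k : 2 < 2 ^ k := by
    calc 2 < 4 := by norm_num
    _ = 2 ^ 2 := by norm_num
    _ ≤ 2 ^ k := Nat.pow_le_pow_right (by norm_num) hk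
  set Z := Subgroup.centralizer (D : Set S) with hZdef
  have hZn : Z.Normal := by
    constructor
    intro z hz t
    rw [Subgroup.mem_centralizer_iff] at hz ⊢
    intro h hh
    have hh' : t⁻¹ * h * t ∈ D := by
      simpa [mul_assoc] using hDn.conj_mem h hh t⁻¹
    have h1 := hz _ hh'
    have h2 := congrArg (fun x => t * x * t⁻¹) h1
    simpa [mul_assoc] using h2
  -- decompose s^2 = z * d
  have hsq : s ^ 2 ∈ (Z : Set S) * (D : Set S) := by
    rw [← Subgroup.normal_mul]
    exact hs
  obtain ⟨z, hz, d, hd, hzd⟩ := hsq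
  by_cases hdC : d ∈ C
  · rw [← hzd]
    exact Subgroup.mul_mem _ ((le_sup_left : Z ≤ Z ⊔ C) hz)
      ((le_sup_right : C ≤ Z ⊔ C) hdC)
  exfalso
  -- a generator of C
  obtain ⟨g₀, hg₀⟩ := hCcyc.exists_generator
  set g : S := (g₀ : S) with hgdef
  have hgC : g ∈ C := g₀.2
  have hordg : orderOf g = 2 ^ k := by
    rw [hgdef, Subgroup.orderOf_coe, orderOf_eq_card_of_forall_mem_zpowers hg₀, hCcard]
  have hmemC : ∀ x : S, x ∈ C → ∃ t : ℤ, x = g ^ t := by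
    intro x hx
    obtain ⟨t, ht⟩ := Subgroup.mem_zpowers_iff.mp (hg₀ ⟨x, hx⟩)
    refine ⟨t, ?_⟩
    have := congrArg (fun y : C => (y : S)) ht
    simpa [hgdef] using this.symm
  set gD : D := ⟨g, hCD hgC⟩ with hgDdef
  have hordgD : orderOf (e gD) = 2 ^ k := by
    rw [e.orderOf_eq, hgDdef, Subgroup.orderOf_mk, hordg]
  have hegrot : e gD ∈ stmt4rots (2 ^ k) := stmt4mem_rots (by rw [hordgD]; exact h2k)
  -- the image of C in the dihedral group is the rotation subgroup
  have hle : (C.subgroupOf D).map (e : D →* DihedralGroup (2 ^ k)) ≤ stmt4rots (2 ^ k) := by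
    rintro _ ⟨x, hx, rfl⟩
    obtain ⟨t, ht⟩ := hmemC _ (Subgroup.mem_subgroupOf.mp hx)
    have hxt : x = gD ^ t := by
      apply Subtype.ext
      simpa [hgDdef] using ht
    rw [hxt]
    simpa [map_zpow] using Subgroup.zpow_mem _ hegrot t
  have hM : (C.subgroupOf D).map (e : D →* DihedralGroup (2 ^ k)) = stmt4rots (2 ^ k) := by
    apply Subgroup.eq_of_le_of_card_ge hle
    have h1 : Nat.card ((C.subgroupOf D).map (e : D →* DihedralGroup (2 ^ k)))
        = Nat.card (C.subgroupOf D) :=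
      (Nat.card_congr ((C.subgroupOf D).equivMapOfInjective _ e.injective).toEquiv).symm
    have h2 : Nat.card (C.subgroupOf D) = Nat.card C :=
      Nat.card_congr (Subgroup.subgroupOfEquivOfLe hCD).toEquiv
    rw [h1, h2, hCcard, stmt4rots_card]
  have key : ∀ x : D, ((x : S) ∈ C ↔ e x ∈ stmt4rots (2 ^ k)) := by
    intro x
    constructor
    · intro hx
      rw [← hM]
      exact Subgroup.mem_map_of_mem _ (Subgroup.mem_subgroupOf.mpr hx)
    · intro hx
      rw [← hM] at hx
      obtain ⟨y, hy, hey⟩ := hx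
      have : y = x := e.injective hey
      subst this
      exact Subgroup.mem_subgroupOf.mp hy
  -- conjugation by s preserves C
  have hh : s⁻¹ * g * s ∈ D := by
    simpa [mul_assoc] using hDn.conj_mem g (hCD hgC) s⁻¹
  have hordh : orderOf (s⁻¹ * g * s) = 2 ^ k := by
    have := stmt4orderOf_conj s⁻¹ g
    simpa [hordg] using this
  have hhC : s⁻¹ * g * s ∈ C := by
    refine (key ⟨s⁻¹ * g * s, hh⟩).mpr (stmt4mem_rots ?_)
    rw [e.orderOf_eq, Subgroup.orderOf_mk, hordh]
    exact h2k
  -- d inverts C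
  have hinv : ∀ x ∈ C, d⁻¹ * x * d = x⁻¹ := by
    intro x hx
    set dD : D := ⟨d, hd⟩ with hdDdef
    set xD : D := ⟨x, hCD hx⟩ with hxDdef
    have hdrot : e dD ∉ stmt4rots (2 ^ k) := fun hrot => hdC ((key dD).mpr hrot)
    obtain ⟨i, hi⟩ : e xD ∈ stmt4rots (2 ^ k) := (key xD).mp hx
    have hdj : ∃ j, e dD = DihedralGroup.sr j := by
      cases hed : e dD with
      | r j => exact absurd ⟨j, hed⟩ hdrot
      | sr j => exact ⟨j, rfl⟩
    obtain ⟨j, hj⟩ := hdj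
    have hcomp : e (dD⁻¹ * xD * dD) = e (xD⁻¹) := by
      rw [map_mul, map_mul, map_inv, map_inv, hi, hj, stmt4sr_inv, stmt4r_inv]
      rw [DihedralGroup.sr_mul_r, DihedralGroup.sr_mul_sr]
      congr 1
      ring
    have : dD⁻¹ * xD * dD = xD⁻¹ := e.injective hcomp
    have := congrArg (fun y : D => (y : S)) this
    simpa [hdDdef, hxDdef] using this
  -- the final contradiction
  obtain ⟨m, hm⟩ := hmemC _ hhC
  have hzg : z⁻¹ * g * z = g := by
    have h1 : g * z = z * g := (Subgroup.mem_centralizer_iff.mp hz) g (hCD hgC)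
    calc z⁻¹ * g * z = z⁻¹ * (g * z) := by rw [mul_assoc]
    _ = z⁻¹ * (z * g) := by rw [h1]
    _ = g := by group
  have hA : s⁻¹ * (s⁻¹ * g * s) * s = g⁻¹ := by
    have hs2 : s⁻¹ * (s⁻¹ * g * s) * s = (s ^ 2)⁻¹ * g * s ^ 2 := by
      rw [pow_two]; group
    rw [hs2, ← hzd]
    calc (z * d)⁻¹ * g * (z * d) = d⁻¹ * (z⁻¹ * g * z) * d := by group
    _ = d⁻¹ * g * d := by rw [hzg]
    _ = g⁻¹ := hinv g hgC
  have hB : s⁻¹ * (s⁻¹ * g * s) * s = g ^ (m * m) := by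
    rw [hm]
    have h1 : s⁻¹ * g ^ m * s = (s⁻¹ * g * s) ^ m := by
      have := conj_zpow (i := m) (a := s⁻¹) (b := g)
      simpa [mul_assoc] using this.symm
    rw [h1, hm, ← zpow_mul]
  have hone : g ^ (m * m + 1) = 1 := by
    rw [zpow_add, zpow_one, ← hB, hA, inv_mul_cancel]
  have hdvd : ((2 ^ k : ℕ) : ℤ) ∣ m * m + 1 := by
    rw [← hordg]
    exact orderOf_dvd_iff_zpow_eq_one.mpr hone
  have h4 : (4 : ℤ) ∣ m * m + 1 := by
    refine dvd_trans ?_ hdvd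
    have : (2 : ℤ) ^ 2 ∣ 2 ^ k := pow_dvd_pow 2 hk
    simpa using this
  have hz4 : ((m : ZMod 4) * (m : ZMod 4) + 1) = 0 := by
    have := (ZMod.intCast_zmod_eq_zero_iff_dvd (m * m + 1) 4).mpr h4
    push_cast at this
    exact this
  have : ∀ a : ZMod 4, a * a + 1 ≠ 0 := by decide
  exact this _ hz4
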